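/- In an irreducible deterministic complete finite automaton, any two minimal images have the same cardinality. -/
import Mathlib


def dcaRun {Q A : Type*} (δ : Q → A → Q) (p : Q) (w : List A) : Q := w.foldl δ p

/-- The image `Q·w` of the whole state set under the word `w`. -/
def dcaImg {Q A : Type*} [Fintype Q] [DecidableEq Q] (δ : Q → A → Q) (w : List A) :
    Finset Q := Finset.univ.image (fun p => dcaRun δ p w)

/-- A minimal image: an image that is minimal for inclusion among all images. -/
def IsMinImage {Q A : Type*} [Fintype Q] [DecidableEq Q] (δ : Q → A → Q)
    (I : Finset Q) : Prop :=
  (∃ w : List A, I = dcaImg δ w) ∧ ∀ w : List A, dcaImg δ w ⊆ I → dcaImg δ w = I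

lemma dcaRun_append {Q A : Type*} (δ : Q → A → Q) (p : Q) (v u : List A) :
    dcaRun δ p (v ++ u) = dcaRun δ (dcaRun δ p v) u := by
  simp [dcaRun, List.foldl_append]

lemma dcaImg_append {Q A : Type*} [Fintype Q] [DecidableEq Q] (δ : Q → A → Q)
    (v u : List A) :
    dcaImg δ (v ++ u) = (dcaImg δ v).image (fun q => dcaRun δ q u) := by
  ext x
  simp only [dcaImg, Finset.mem_image, Finset.mem_univ, true_and]
  constructor
  · rintro ⟨p, rfl⟩
    exact ⟨dcaRun δ p v, ⟨p, rfl⟩, (dcaRun_append δ p v u).symm⟩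
  · rintro ⟨q, ⟨p, rfl⟩, rfl⟩
    exact ⟨p, dcaRun_append δ p v u⟩

lemma minImage_card_le {Q A : Type*} [Fintype Q] [DecidableEq Q]
    (δ : Q → A → Q) (I J : Finset Q) (hI : IsMinImage δ I)
    (hJ : ∃ v : List A, J = dcaImg δ v) : I.card ≤ J.card := by
  obtain ⟨u, hu⟩ := hI.1
  obtain ⟨v, hv⟩ := hJ
  have hsub : dcaImg δ (v ++ u) ⊆ I := by
    intro x hx
    rw [dcaImg_append] at hx
    obtain ⟨q, _, rfl⟩ := Finset.mem_image.mp hx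
    rw [hu]
    exact Finset.mem_image.mpr ⟨q, Finset.mem_univ _, rfl⟩
  have heq := hI.2 (v ++ u) hsub
  calc I.card = (dcaImg δ (v ++ u)).card := by rw [heq]
    _ = (J.image (fun q => dcaRun δ q u)).card := by rw [dcaImg_append, hv]
    _ ≤ J.card := Finset.card_image_le

/-- In an irreducible automaton any two minimal images have the same cardinality. -/
theorem minImages_same_card {Q A : Type*} [Fintype Q] [DecidableEq Q]
    (δ : Q → A → Q) (hirr : ∀ p q : Q, ∃ w : List A, dcaRun δ p w = q)
    (I J : Finset Q) (hI : IsMinImage δ I) (hJ : IsMinImage δ J) :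
    I.card = J.card :=
  le_antisymm (minImage_card_le δ I J hI hJ.1) (minImage_card_le δ J I hJ hI.1)
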